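/- Let H_K be an RKHS with kernel K, S_T = span of n orthonormal eigenfunctions of T corresponding to its largest eigenvalues, and E(W) = ∫_Ω dist²(K(t,·), W) dμ(t). If the matrix E = [e_k(x_j)] is nonsingular, then E(S_X) - E(S_T) ≤ 2 K_Ω sqrt(1 - 1/λ_max(K[X]^T(EE*)^{-1})), where K_Ω = ∫_Ω K(t,t) dμ(t). -/

import Mathlib

open MeasureTheory
open Matrix
open scoped RealInnerProductSpace

lemma dot_mulVec_swap {m : ℕ} (U : Matrix (Fin m) (Fin m) ℝ) (y w : Fin m → ℝ) :
    y ⬝ᵥ (U *ᵥ w) = ((star U) *ᵥ y) ⬝ᵥ w := by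
  rw [Matrix.dotProduct_mulVec, star_eq_conjTranspose, conjTranspose_eq_transpose_of_trivial,
    Matrix.mulVec_transpose]

lemma rayleigh_upper {m : ℕ} (S : Matrix (Fin m) (Fin m) ℝ) (hS : S.IsHermitian)
    (r : ℝ) (hr : ∀ i, hS.eigenvalues i ≤ r) (y : Fin m → ℝ) :
    y ⬝ᵥ (S *ᵥ y) ≤ r * (y ⬝ᵥ y) := by
  classical
  set U : Matrix (Fin m) (Fin m) ℝ := (hS.eigenvectorUnitary : Matrix (Fin m) (Fin m) ℝ) with hU
  have hUU : U * star U = 1 := (Matrix.mem_unitaryGroup_iff).mp hS.eigenvectorUnitary.2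
  set z : Fin m → ℝ := (star U) *ᵥ y with hz
  have hyz : U *ᵥ z = y := by rw [hz, mulVec_mulVec, hUU, one_mulVec]
  have h1 : y ⬝ᵥ (S *ᵥ y) = z ⬝ᵥ ((diagonal hS.eigenvalues) *ᵥ z) := by
    conv_lhs => rw [hS.spectral_theorem, Unitary.conjStarAlgAut_apply]
    rw [← mulVec_mulVec, ← mulVec_mulVec, dot_mulVec_swap, ← hz]
    norm_num [Function.comp]
  have h2 : y ⬝ᵥ y = z ⬝ᵥ z := by
    conv_lhs => rw [← hyz]
    rw [dot_mulVec_swap, mulVec_mulVec]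
    have : star U * U = 1 := Matrix.mem_unitaryGroup_iff'.mp hS.eigenvectorUnitary.2
    rw [this, one_mulVec]
  rw [h1, h2]
  simp only [dotProduct, Matrix.mulVec_diagonal, Finset.mul_sum]
  apply Finset.sum_le_sum
  intro i _
  have : z i * (hS.eigenvalues i * z i) = hS.eigenvalues i * (z i)^2 := by ring
  rw [this]
  have h4 : z i * z i = (z i)^2 := by ring
  rw [h4]
  exact mul_le_mul_of_nonneg_right (hr i) (sq_nonneg _)

open scoped MatrixOrder in
lemma coreQ {m : ℕ} (A B : Matrix (Fin m) (Fin m) ℝ) (hA : A.IsHermitian) (hB : B.PosDef)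
    (c : ℝ) (hbound : ∀ (r : ℝ) (v : Fin m → ℝ), v ≠ 0 → (A * B⁻¹) *ᵥ v = r • v → r ≤ c)
    (a : Fin m → ℝ) : a ⬝ᵥ (A *ᵥ a) ≤ c * (a ⬝ᵥ (B *ᵥ a)) := by
  classical
  rcases Nat.eq_zero_or_pos m with hm | hm
  · subst hm
    simp [dotProduct]
  haveI : NeZero m := ⟨hm.ne'⟩
  set R : Matrix (Fin m) (Fin m) ℝ := CFC.sqrt B with hRdef
  have hRR : R * R = B := CFC.sqrt_mul_sqrt_self B hB.posSemidef.nonneg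
  have hRH : R.IsHermitian := (CFC.sqrt_nonneg B).posSemidef.1
  have hRdet : IsUnit R.det := by
    have : R.det * R.det = B.det := by rw [← Matrix.det_mul, hRR]
    have hBdet : B.det ≠ 0 := ne_of_gt hB.det_pos
    refine isUnit_iff_ne_zero.mpr fun h => hBdet ?_
    rw [← this, h, mul_zero]
  have hRiR : R⁻¹ * R = 1 := Matrix.nonsing_inv_mul R hRdet
  have hRRi : R * R⁻¹ = 1 := Matrix.mul_nonsing_inv R hRdet
  have hRiH : (R⁻¹).IsHermitian := by
    unfold Matrix.IsHermitian
    rw [Matrix.conjTranspose_nonsing_inv, hRH.eq]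
  set S : Matrix (Fin m) (Fin m) ℝ := R⁻¹ * A * R⁻¹ with hSdef
  have hS : S.IsHermitian := by
    unfold Matrix.IsHermitian
    rw [hSdef, Matrix.conjTranspose_mul, Matrix.conjTranspose_mul, hRiH.eq, hA.eq]
    rw [Matrix.mul_assoc]
  obtain ⟨i0, hi0⟩ : ∃ i0 : Fin m, ∀ i, hS.eigenvalues i ≤ hS.eigenvalues i0 := by
    obtain ⟨i0, -, h⟩ := Finset.exists_max_image Finset.univ hS.eigenvalues
      ⟨⟨0, hm⟩, Finset.mem_univ _⟩
    exact ⟨i0, fun i => h i (Finset.mem_univ _)⟩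
  set r : ℝ := hS.eigenvalues i0 with hrdef
  set w : Fin m → ℝ := ⇑(hS.eigenvectorBasis i0) with hwdef
  have hw0 : w ≠ 0 := by
    have := hS.eigenvectorBasis.orthonormal.ne_zero i0
    intro h
    apply this
    ext j
    exact congrFun h j
  have hSw : S *ᵥ w = r • w := hS.mulVec_eigenvectorBasis i0
  have hBinv : B⁻¹ = R⁻¹ * R⁻¹ := by rw [← hRR, Matrix.mul_inv_rev]
  have hkey : A * B⁻¹ * R = R * S := by
    rw [hBinv, hSdef]
    calc A * (R⁻¹ * R⁻¹) * R = A * R⁻¹ * (R⁻¹ * R) := by noncomm_ring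
    _ = A * R⁻¹ := by rw [hRiR, Matrix.mul_one]
    _ = (R * R⁻¹) * A * R⁻¹ := by rw [hRRi, Matrix.one_mul]
    _ = R * (R⁻¹ * A * R⁻¹) := by noncomm_ring
  have hv0 : R *ᵥ w ≠ 0 := by
    intro h
    apply hw0
    have : R⁻¹ *ᵥ (R *ᵥ w) = w := by rw [mulVec_mulVec, hRiR, one_mulVec]
    rw [h, Matrix.mulVec_zero] at this
    exact this.symm
  have heig : (A * B⁻¹) *ᵥ (R *ᵥ w) = r • (R *ᵥ w) := by
    rw [mulVec_mulVec, hkey, ← mulVec_mulVec, hSw, Matrix.mulVec_smul]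
  have hrc : r ≤ c := hbound r _ hv0 heig
  set y : Fin m → ℝ := R *ᵥ a with hydef
  have hstarRi : star (R⁻¹) = R⁻¹ := by rw [star_eq_conjTranspose, hRiH.eq]
  have hstarR : star R = R := by rw [star_eq_conjTranspose, hRH.eq]
  have e1 : a ⬝ᵥ (A *ᵥ a) = y ⬝ᵥ (S *ᵥ y) := by
    have h5 : S *ᵥ y = R⁻¹ *ᵥ (A *ᵥ a) := by
      rw [hydef, hSdef, mulVec_mulVec, Matrix.mul_assoc, Matrix.mul_assoc, hRiR,
        Matrix.mul_one, ← mulVec_mulVec]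
    rw [h5, dot_mulVec_swap (R⁻¹) y (A *ᵥ a), hstarRi, hydef, mulVec_mulVec, hRiR, one_mulVec]
  have e2 : a ⬝ᵥ (B *ᵥ a) = y ⬝ᵥ y := by
    conv_rhs => rw [hydef]
    rw [dot_mulVec_swap R y a, hstarR, hydef, mulVec_mulVec, hRR]
    rw [dotProduct_comm]
  rw [e1, e2]
  calc y ⬝ᵥ (S *ᵥ y) ≤ r * (y ⬝ᵥ y) := rayleigh_upper S hS r hi0 y
  _ ≤ c * (y ⬝ᵥ y) := by
      apply mul_le_mul_of_nonneg_right hrc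
      rw [← e2]
      have := hB.posSemidef.dotProduct_mulVec_nonneg a
      simpa using this

section Hilbert

variable {E : Type*} [NormedAddCommGroup E] [InnerProductSpace ℝ E]

lemma inner_proj_self (W : Submodule ℝ E) [W.HasOrthogonalProjection] (u : E) :
    ⟪u, (W.starProjection u : E)⟫ = ‖(W.starProjection u : E)‖ ^ 2 := by
  have h := Submodule.starProjection_inner_eq_zero u (W.starProjection u : E)
    (W.orthogonalProjectionOnto u).2
  have : ⟪u, (W.starProjection u : E)⟫
      = ⟪(W.starProjection u : E), (W.starProjection u : E)⟫ := by
    have h2 := inner_sub_left (𝕜 := ℝ) u (W.starProjection u : E)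
      (W.starProjection u : E)
    rw [h] at h2
    linarith
  rw [this, real_inner_self_eq_norm_sq]

lemma norm_proj_le (W : Submodule ℝ E) [W.HasOrthogonalProjection] (u : E) :
    ‖(W.starProjection u : E)‖ ≤ ‖u‖ := by
  by_cases h : (W.starProjection u : E) = 0
  · rw [h]; simp [norm_nonneg]
  · have h1 := inner_proj_self W u
    have h2 := real_inner_le_norm u (W.starProjection u : E)
    have h3 : 0 < ‖(W.starProjection u : E)‖ := norm_pos_iff.mpr h
    nlinarith

lemma norm_sub_proj_sq (W : Submodule ℝ E) [W.HasOrthogonalProjection] (u : E) :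
    ‖u - (W.starProjection u : E)‖ ^ 2 = ‖u‖ ^ 2 - ‖(W.starProjection u : E)‖ ^ 2 := by
  rw [norm_sub_sq_real, inner_proj_self]
  ring

lemma infDist_submodule (W : Submodule ℝ E) [W.HasOrthogonalProjection] (u : E) :
    Metric.infDist u (W : Set E) = ‖u - (W.starProjection u : E)‖ := by
  rw [Metric.infDist_eq_iInf, Submodule.starProjection_minimal]
  congr 1
  ext y
  rw [dist_eq_norm]

lemma proj_lower (W : Submodule ℝ E) [W.HasOrthogonalProjection] (u w' : E) (hw' : w' ∈ W)
    (h : ⟪w', u⟫ = ‖w'‖ ^ 2) : ‖w'‖ ^ 2 ≤ ‖(W.starProjection u : E)‖ ^ 2 := by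
  have horth := Submodule.starProjection_inner_eq_zero u w' hw'
  have hPw : ⟪w', (W.starProjection u : E)⟫ = ‖w'‖ ^ 2 := by
    have : ⟪u - (W.starProjection u : E), w'⟫ = 0 := horth
    rw [inner_sub_left] at this
    rw [real_inner_comm] at h ⊢
    linarith
  by_cases hz : w' = 0
  · simp [hz]
  · have h2 := real_inner_le_norm w' (W.starProjection u : E)
    have h3 : 0 < ‖w'‖ := norm_pos_iff.mpr hz
    nlinarith [norm_nonneg (W.starProjection u : E)]

lemma two_proj_diff (SX ST : Submodule ℝ E) [SX.HasOrthogonalProjection]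
    [ST.HasOrthogonalProjection] (s : ℝ) (hs : 0 ≤ s)
    (h1 : ∀ w ∈ ST, ‖w - (SX.starProjection w : E)‖ ≤ s * ‖w‖)
    (h2 : ∀ v ∈ SX, ‖v - (ST.starProjection v : E)‖ ≤ s * ‖v‖) (u : E) :
    ‖(ST.starProjection u : E)‖ ^ 2 - ‖(SX.starProjection u : E)‖ ^ 2
      ≤ 2 * s * ‖u‖ ^ 2 := by
  set p : E := (SX.starProjection u : E) with hp
  set q : E := (ST.starProjection u : E) with hq
  have hq2 : ‖q‖ ^ 2 = ⟪q, u⟫ := by rw [← inner_proj_self ST u, real_inner_comm]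
  have hp2 : ‖p‖ ^ 2 = ⟪p, u⟫ := by rw [← inner_proj_self SX u, real_inner_comm]
  have key : ⟪q, u⟫ - ⟪p, u⟫
      = ⟪q - (SX.starProjection q : E), u⟫
        - ⟪u - q, p - (ST.starProjection p : E)⟫ := by
    have hA : ⟪q, u⟫ = ⟪q - (SX.starProjection q : E), u⟫
        + ⟪(SX.starProjection q : E), u⟫ := by
      rw [← inner_add_left, sub_add_cancel]
    have hselfadj : ⟪(SX.starProjection q : E), u⟫ = ⟪q, p⟫ := by
      rw [hp, Submodule.inner_starProjection_left_eq_right]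
    have hB : ⟪p, u⟫ - ⟪q, p⟫ = ⟪u - q, p⟫ := by
      rw [inner_sub_left, real_inner_comm u p]
    have hC : ⟪u - q, p⟫ = ⟪u - q, p - (ST.starProjection p : E)⟫
        + ⟪u - q, (ST.starProjection p : E)⟫ := by
      rw [← inner_add_right, sub_add_cancel]
    have hD : ⟪u - q, (ST.starProjection p : E)⟫ = 0 := by
      rw [hq]
      exact Submodule.starProjection_inner_eq_zero u _ (ST.orthogonalProjectionOnto p).2
    linarith [hA, hselfadj, hB, hC, hD]
  have b1 : ⟪q - (SX.starProjection q : E), u⟫ ≤ s * ‖u‖ ^ 2 := by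
    have := h1 q (ST.orthogonalProjectionOnto u).2
    calc ⟪q - (SX.starProjection q : E), u⟫ ≤ ‖q - (SX.starProjection q : E)‖ * ‖u‖ :=
      real_inner_le_norm _ _
    _ ≤ (s * ‖q‖) * ‖u‖ := by
        apply mul_le_mul_of_nonneg_right this (norm_nonneg u)
    _ ≤ (s * ‖u‖) * ‖u‖ := by
        have := norm_proj_le ST u
        apply mul_le_mul_of_nonneg_right _ (norm_nonneg u)
        exact mul_le_mul_of_nonneg_left this hs
    _ = s * ‖u‖ ^ 2 := by ring
  have b2 : -⟪u - q, p - (ST.starProjection p : E)⟫ ≤ s * ‖u‖ ^ 2 := by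
    have hup : ‖p - (ST.starProjection p : E)‖ ≤ s * ‖p‖ :=
      h2 p (SX.orthogonalProjectionOnto u).2
    have huq : ‖u - q‖ ≤ ‖u‖ := by
      have h4 := norm_sub_proj_sq ST u
      have h5 := norm_nonneg (u - q)
      have h6 := norm_nonneg u
      nlinarith [norm_nonneg q]
    calc -⟪u - q, p - (ST.starProjection p : E)⟫
        ≤ ‖u - q‖ * ‖p - (ST.starProjection p : E)‖ := by
          calc -⟪u - q, p - (ST.starProjection p : E)⟫
              ≤ |⟪u - q, p - (ST.starProjection p : E)⟫| := neg_le_abs _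
          _ ≤ ‖u - q‖ * ‖p - (ST.starProjection p : E)‖ := abs_real_inner_le_norm _ _
    _ ≤ ‖u‖ * (s * ‖p‖) := by
        apply mul_le_mul huq hup (norm_nonneg _) (norm_nonneg _)
    _ ≤ ‖u‖ * (s * ‖u‖) := by
        apply mul_le_mul_of_nonneg_left _ (norm_nonneg u)
        exact mul_le_mul_of_nonneg_left (norm_proj_le SX u) hs
    _ = s * ‖u‖ ^ 2 := by ring
  rw [hq2, hp2]
  linarith [key, b1, b2]

end Hilbert

set_option maxHeartbeats 1000000 in
/-- If `S_T` is the span of `n` orthonormal eigenfunctions of the integral operator `T`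
corresponding to its largest eigenvalues and the matrix `E = [e k (x j)]` is nonsingular,
then `E(S_X) - E(S_T) ≤ 2 K_Ω √(1 - 1/λ_max(K[X]ᵀ (E Eᴴ)⁻¹))`, where
`E(W) = ∫_Ω dist²(K(t,·), W) dμ(t)` and `K_Ω = ∫_Ω K(t,t) dμ(t)`. -/
theorem stmt_15 {X : Type*} [TopologicalSpace X] [T2Space X] [MeasurableSpace X]
    [OpensMeasurableSpace X] {H : Type*} [NormedAddCommGroup H] [InnerProductSpace ℝ H]
    [CompleteSpace H]
    (k : X → H) (K : X → X → ℝ) (hK : ∀ x y : X, K x y = ⟪k x, k y⟫)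
    (hKcont : Continuous fun p : X × X => K p.1 p.2)
    (Ω : Set X) (hΩ : IsCompact Ω) (μ : Measure X) [IsFiniteMeasure μ]
    (T : H →L[ℝ] H)
    (hT : ∀ f g : H, ⟪T f, g⟫ = ∫ t in Ω, ⟪f, k t⟫ * ⟪k t, g⟫ ∂μ)
    {n : ℕ} (e : Fin n → H) (he : Orthonormal ℝ e) (lam : Fin n → ℝ)
    (heig : ∀ j : Fin n, T (e j) = lam j • e j)
    (hmax : ∀ (a : ℝ) (v : H), v ≠ 0 → T v = a • v → (∀ j : Fin n, ⟪e j, v⟫ = 0) →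
      ∀ j : Fin n, a ≤ lam j)
    (x : Fin n → X) (KX Emat : Matrix (Fin n) (Fin n) ℝ)
    (hKX : ∀ j l : Fin n, KX j l = K (x j) (x l))
    (hE : ∀ j l : Fin n, Emat j l = ⟪e l, k (x j)⟫)
    (hEu : IsUnit Emat.det)
    (c : ℝ)
    (hc : IsGreatest
      {r : ℝ | ∃ v : Fin n → ℝ, v ≠ 0 ∧
        (KX.transpose * (Emat * Emat.conjTranspose)⁻¹).mulVec v = r • v} c) :
    (∫ t in Ω,
        Metric.infDist (k t)
          (Submodule.span ℝ (Set.range fun j : Fin n => k (x j)) : Set H) ^ 2 ∂μ) -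
        (∫ t in Ω,
          Metric.infDist (k t) (Submodule.span ℝ (Set.range e) : Set H) ^ 2 ∂μ) ≤
      2 * (∫ t in Ω, K t t ∂μ) * Real.sqrt (1 - 1 / c) := by
  classical
  set SX : Submodule ℝ H := Submodule.span ℝ (Set.range fun j : Fin n => k (x j)) with hSXdef
  set ST : Submodule ℝ H := Submodule.span ℝ (Set.range e) with hSTdef
  haveI : FiniteDimensional ℝ SX := FiniteDimensional.span_of_finite ℝ (Set.finite_range _)
  haveI : FiniteDimensional ℝ ST := FiniteDimensional.span_of_finite ℝ (Set.finite_range _)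
  have hk_mem : ∀ j, k (x j) ∈ SX := fun j =>
    Submodule.subset_span ⟨j, rfl⟩
  have he_mem : ∀ l, e l ∈ ST := fun l => Submodule.subset_span ⟨l, rfl⟩
  -- basic matrix facts
  have hKsym : ∀ j l, KX j l = KX l j := by
    intro j l; rw [hKX, hKX, hK, hK, real_inner_comm]
  have hKXt : KX.transpose = KX := by
    ext j l
    rw [Matrix.transpose_apply]
    exact hKsym l j
  set G : Matrix (Fin n) (Fin n) ℝ := Emat * Emat.transpose with hGdef
  set M : Matrix (Fin n) (Fin n) ℝ := KX * G⁻¹ with hMdef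
  have hMeq : KX.transpose * (Emat * Emat.conjTranspose)⁻¹ = M := by
    rw [Matrix.conjTranspose_eq_transpose_of_trivial, hKXt]
  simp only [hMeq] at hc
  have hEtdet : IsUnit Emat.transpose.det := by rwa [Matrix.det_transpose]
  have hGherm : G.IsHermitian := by
    unfold Matrix.IsHermitian
    rw [hGdef, Matrix.conjTranspose_mul, Matrix.conjTranspose_eq_transpose_of_trivial,
      Matrix.conjTranspose_eq_transpose_of_trivial, Matrix.transpose_transpose]
  have hEta : ∀ a : Fin n → ℝ,
      Emat.transpose *ᵥ a = fun l => ⟪e l, ∑ j, a j • k (x j)⟫ := by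
    intro a
    ext l
    rw [inner_sum]
    simp only [real_inner_smul_right, ← hE]
    simp [Matrix.mulVec, dotProduct, mul_comm]
  have hcomb : ∀ a : Fin n → ℝ, ‖∑ j, a j • k (x j)‖ ^ 2 = a ⬝ᵥ (KX *ᵥ a) := by
    intro a
    rw [← real_inner_self_eq_norm_sq, sum_inner]
    simp only [real_inner_smul_left, inner_sum, real_inner_smul_right]
    simp only [dotProduct, Matrix.mulVec, hKX, hK]
    apply Finset.sum_congr rfl
    intro j _
    rw [Finset.mul_sum]
    apply Finset.sum_congr rfl
    intro l _
    ring
  have hGq : ∀ a : Fin n → ℝ,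
      a ⬝ᵥ (G *ᵥ a) = (Emat.transpose *ᵥ a) ⬝ᵥ (Emat.transpose *ᵥ a) := by
    intro a
    have h1 : (Emat.transpose *ᵥ a) ⬝ᵥ (Emat.transpose *ᵥ a)
        = ((Emat * Emat.transpose) *ᵥ a) ⬝ᵥ a := by
      rw [dot_mulVec_swap, star_eq_conjTranspose, Matrix.conjTranspose_eq_transpose_of_trivial,
        Matrix.transpose_transpose, Matrix.mulVec_mulVec]
    rw [h1, dotProduct_comm]
  have hGpd : G.PosDef := by
    refine Matrix.PosDef.of_dotProduct_mulVec_pos hGherm ?_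
    intro v hv
    have hstar : star v = v := by ext i; simp
    rw [hstar, hGq v]
    have hvne : Emat.transpose *ᵥ v ≠ 0 := by
      intro h
      apply hv
      have h2 := congrArg (fun w => (Emat.transpose)⁻¹ *ᵥ w) h
      simpa [Matrix.mulVec_mulVec, Matrix.nonsing_inv_mul _ hEtdet] using h2
    have := dotProduct_self_eq_zero (v := Emat.transpose *ᵥ v)
    rcases lt_or_eq_of_le (Finset.sum_nonneg fun i _ =>
      mul_self_nonneg ((Emat.transpose *ᵥ v) i)) with h | h
    · exact h
    · exact absurd (this.mp h.symm) hvne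
  have hBessel : ∀ a : Fin n → ℝ, a ⬝ᵥ (G *ᵥ a) ≤ a ⬝ᵥ (KX *ᵥ a) := by
    intro a
    rw [hGq a, ← hcomb a, hEta a]
    have hb := he.sum_inner_products_le (∑ j, a j • k (x j)) (s := Finset.univ)
    calc (fun l => ⟪e l, ∑ j, a j • k (x j)⟫) ⬝ᵥ (fun l => ⟪e l, ∑ j, a j • k (x j)⟫)
        = ∑ l, ‖⟪e l, ∑ j, a j • k (x j)⟫‖ ^ 2 := by
          apply Finset.sum_congr rfl
          intro l _
          rw [Real.norm_eq_abs, sq_abs, pow_two]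
    _ ≤ ‖∑ j, a j • k (x j)‖ ^ 2 := hb
  have hKXpd : KX.PosDef := by
    refine Matrix.PosDef.of_dotProduct_mulVec_pos ?_ ?_
    · unfold Matrix.IsHermitian
      rw [Matrix.conjTranspose_eq_transpose_of_trivial, hKXt]
    · intro v hv
      have hstar : star v = v := by ext i; simp
      rw [hstar]
      have h1 := hGpd.dotProduct_mulVec_pos hv
      rw [hstar] at h1
      exact lt_of_lt_of_le h1 (hBessel v)
  have hKXdet : IsUnit KX.det := isUnit_iff_ne_zero.mpr hKXpd.det_pos.ne'
  have hGdet : IsUnit G.det := isUnit_iff_ne_zero.mpr hGpd.det_pos.ne'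
  -- c bounds
  have quadKX : ∀ a : Fin n → ℝ, a ⬝ᵥ (KX *ᵥ a) ≤ c * (a ⬝ᵥ (G *ᵥ a)) := by
    intro a
    refine coreQ KX G hKXpd.1 hGpd c ?_ a
    intro r v hv hMv
    exact hc.2 ⟨v, hv, hMv⟩
  have hc1 : 1 ≤ c := by
    obtain ⟨v, hv0, hMv⟩ := hc.1
    set u : Fin n → ℝ := G⁻¹ *ᵥ v with hu
    have hGu : G *ᵥ u = v := by
      rw [hu, Matrix.mulVec_mulVec, Matrix.mul_nonsing_inv _ hGdet, Matrix.one_mulVec]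
    have hu0 : u ≠ 0 := by
      intro h
      apply hv0
      rw [← hGu, h, Matrix.mulVec_zero]
    have hKXu : KX *ᵥ u = c • v := by
      rw [← hMv, hMdef, ← Matrix.mulVec_mulVec, hu]
    have h1 : u ⬝ᵥ (KX *ᵥ u) = c * (u ⬝ᵥ v) := by
      rw [hKXu, dotProduct_smul, smul_eq_mul]
    have h2 : u ⬝ᵥ (G *ᵥ u) = u ⬝ᵥ v := by rw [hGu]
    have h3 : 0 < u ⬝ᵥ (G *ᵥ u) := by
      have := hGpd.dotProduct_mulVec_pos hu0
      have hstar : star u = u := by ext i; simp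
      rwa [hstar] at this
    have h4 := hBessel u
    nlinarith [h1, h2, h3, h4]
  have hcpos : 0 < c := lt_of_lt_of_le one_pos hc1
  set s : ℝ := Real.sqrt (1 - 1/c) with hsdef
  have h1c : 0 ≤ 1 - 1/c := by
    have : 1/c ≤ 1 := by
      rw [div_le_one hcpos]
      exact hc1
    linarith
  have hs0 : 0 ≤ s := Real.sqrt_nonneg _
  have hs2 : s ^ 2 = 1 - 1/c := Real.sq_sqrt h1c
  -- N matrix
  set N : Matrix (Fin n) (Fin n) ℝ := Emat.transpose * KX⁻¹ * Emat with hNdef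
  have hKXinv_herm : (KX⁻¹).IsHermitian := hKXpd.1.inv
  have hNpd : N.PosDef := by
    refine Matrix.PosDef.of_dotProduct_mulVec_pos ?_ ?_
    · unfold Matrix.IsHermitian
      rw [hNdef, Matrix.conjTranspose_mul, Matrix.conjTranspose_mul, hKXinv_herm.eq,
        Matrix.conjTranspose_eq_transpose_of_trivial, Matrix.conjTranspose_eq_transpose_of_trivial,
        Matrix.transpose_transpose, Matrix.mul_assoc]
    · intro v hv
      have hstar : star v = v := by ext i; simp
      rw [hstar]
      have hEv : Emat *ᵥ v ≠ 0 := by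
        intro h
        apply hv
        have h2 := congrArg (fun w => Emat⁻¹ *ᵥ w) h
        simpa [Matrix.mulVec_mulVec, Matrix.nonsing_inv_mul _ hEu] using h2
      have hpos := hKXpd.inv.dotProduct_mulVec_pos hEv
      have hstar2 : star (Emat *ᵥ v) = Emat *ᵥ v := by ext i; simp
      rw [hstar2] at hpos
      have hNv : N *ᵥ v = Emat.transpose *ᵥ (KX⁻¹ *ᵥ (Emat *ᵥ v)) := by
        rw [hNdef, ← Matrix.mulVec_mulVec, ← Matrix.mulVec_mulVec]
      rw [hNv, dot_mulVec_swap, star_eq_conjTranspose,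
        Matrix.conjTranspose_eq_transpose_of_trivial, Matrix.transpose_transpose]
      exact hpos
  have quadN : ∀ b : Fin n → ℝ, b ⬝ᵥ b ≤ c * (b ⬝ᵥ (N *ᵥ b)) := by
    intro b
    have h := coreQ 1 N Matrix.isHermitian_one hNpd c ?_ b
    · simpa using h
    · intro r v hv hNv
      rw [Matrix.one_mul] at hNv
      have hNinv : N⁻¹ = Emat⁻¹ * KX * (Emat.transpose)⁻¹ := by
        rw [hNdef, Matrix.mul_inv_rev, Matrix.mul_inv_rev,
          Matrix.nonsing_inv_nonsing_inv _ hKXdet, Matrix.mul_assoc]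
      apply hc.2
      refine ⟨Emat *ᵥ v, ?_, ?_⟩
      · intro h
        apply hv
        have h2 := congrArg (fun w => Emat⁻¹ *ᵥ w) h
        simpa [Matrix.mulVec_mulVec, Matrix.nonsing_inv_mul _ hEu] using h2
      · have hGi : G⁻¹ = (Emat.transpose)⁻¹ * Emat⁻¹ := by
          rw [hGdef, Matrix.mul_inv_rev]
        have hlhs : M *ᵥ (Emat *ᵥ v) = (KX * (Emat.transpose)⁻¹) *ᵥ v := by
          rw [hMdef, hGi, Matrix.mulVec_mulVec]
          congr 1
          rw [Matrix.mul_assoc, Matrix.mul_assoc, Matrix.nonsing_inv_mul _ hEu, Matrix.mul_one]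
        have hrhs : r • (Emat *ᵥ v) = (KX * (Emat.transpose)⁻¹) *ᵥ v := by
          rw [← Matrix.mulVec_smul, ← hNv, hNinv, Matrix.mulVec_mulVec]
          congr 1
          rw [← Matrix.mul_assoc, ← Matrix.mul_assoc, Matrix.mul_nonsing_inv _ hEu,
            Matrix.one_mul]
        rw [hlhs, hrhs]
  -- bound (ii): vectors of S_X are close to S_T
  have hSXb : ∀ v ∈ SX, ‖v - (ST.starProjection v : H)‖ ≤ s * ‖v‖ := by
    intro v hv
    obtain ⟨a, ha⟩ := (Submodule.mem_span_range_iff_exists_fun ℝ).mp hv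
    set w' : H := ∑ l, ⟪e l, v⟫ • e l with hw'
    have hw'mem : w' ∈ ST := Submodule.sum_mem _ fun l _ => Submodule.smul_mem _ _ (he_mem l)
    have hw'n : ‖w'‖ ^ 2 = ∑ l, ⟪e l, v⟫ ^ 2 := by
      rw [← real_inner_self_eq_norm_sq, hw', he.inner_sum]
      simp [pow_two]
    have hw'i : ⟪w', v⟫ = ∑ l, ⟪e l, v⟫ ^ 2 := by
      rw [hw', sum_inner]
      simp [real_inner_smul_left, pow_two]
    have hlow := proj_lower ST v w' hw'mem (by rw [hw'i, hw'n])
    have hEtav : Emat.transpose *ᵥ a = fun l => ⟪e l, v⟫ := by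
      rw [hEta a, ha]
    have hGa : a ⬝ᵥ (G *ᵥ a) = ∑ l, ⟪e l, v⟫ ^ 2 := by
      rw [hGq a, hEtav]
      simp [dotProduct, pow_two]
    have hva : ‖v‖ ^ 2 = a ⬝ᵥ (KX *ᵥ a) := by rw [← ha, hcomb]
    have h5 : ∑ l, ⟪e l, v⟫ ^ 2 ≤ ‖(ST.starProjection v : H)‖ ^ 2 := by
      rw [← hw'n]; exact hlow
    have h6 : ‖v‖ ^ 2 ≤ c * ∑ l, ⟪e l, v⟫ ^ 2 := by
      rw [hva, ← hGa]; exact quadKX a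
    have h8 : ‖v‖ ^ 2 ≤ c * ‖(ST.starProjection v : H)‖ ^ 2 :=
      le_trans h6 (mul_le_mul_of_nonneg_left h5 hcpos.le)
    have h9 : ‖v‖ ^ 2 / c ≤ ‖(ST.starProjection v : H)‖ ^ 2 :=
      (div_le_iff₀ hcpos).mpr (by linarith [h8])
    have key : ‖v - (ST.starProjection v : H)‖ ^ 2 ≤ (s * ‖v‖) ^ 2 := by
      have hQ := norm_sub_proj_sq ST v
      have hexp : (s * ‖v‖) ^ 2 = (1 - 1/c) * ‖v‖ ^ 2 := by rw [mul_pow, hs2]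
      have hexp2 : (1 - 1/c) * ‖v‖ ^ 2 = ‖v‖ ^ 2 - ‖v‖ ^ 2 / c := by ring
      rw [hexp, hexp2, hQ]
      linarith [h9]
    calc ‖v - (ST.starProjection v : H)‖
        = Real.sqrt (‖v - (ST.starProjection v : H)‖ ^ 2) :=
          (Real.sqrt_sq (norm_nonneg _)).symm
    _ ≤ Real.sqrt ((s * ‖v‖) ^ 2) := Real.sqrt_le_sqrt key
    _ = s * ‖v‖ := Real.sqrt_sq (by positivity)
  -- bound (i): vectors of S_T are close to S_X
  have hSTb : ∀ w ∈ ST, ‖w - (SX.starProjection w : H)‖ ≤ s * ‖w‖ := by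
    intro w hw
    obtain ⟨b, hb⟩ := (Submodule.mem_span_range_iff_exists_fun ℝ).mp hw
    have hwn : ‖w‖ ^ 2 = b ⬝ᵥ b := by
      rw [← hb, ← real_inner_self_eq_norm_sq, he.inner_sum]
      simp [dotProduct]
    set gv : Fin n → ℝ := Emat *ᵥ b with hgv
    set a : Fin n → ℝ := KX⁻¹ *ᵥ gv with hadef
    have hKXa : KX *ᵥ a = gv := by
      rw [hadef, Matrix.mulVec_mulVec, Matrix.mul_nonsing_inv _ hKXdet, Matrix.one_mulVec]
    set u' : H := ∑ j, a j • k (x j) with hu'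
    have hu'mem : u' ∈ SX := Submodule.sum_mem _ fun j _ => Submodule.smul_mem _ _ (hk_mem j)
    have hinner_kw : ∀ j, ⟪k (x j), w⟫ = gv j := by
      intro j
      rw [← hb, inner_sum]
      simp only [real_inner_smul_right]
      rw [hgv]
      simp only [Matrix.mulVec, dotProduct]
      apply Finset.sum_congr rfl
      intro l _
      rw [real_inner_comm, ← hE, mul_comm]
    have hu'w : ⟪u', w⟫ = a ⬝ᵥ gv := by
      rw [hu', sum_inner]
      simp only [real_inner_smul_left, hinner_kw, dotProduct]
    have hu'n : ‖u'‖ ^ 2 = a ⬝ᵥ gv := by rw [hu', hcomb, hKXa]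
    have hlow := proj_lower SX w u' hu'mem (by rw [hu'w, hu'n])
    have hNb : b ⬝ᵥ (N *ᵥ b) = a ⬝ᵥ gv := by
      have h1 : N *ᵥ b = Emat.transpose *ᵥ a := by
        rw [hNdef, ← Matrix.mulVec_mulVec, ← Matrix.mulVec_mulVec, hadef, hgv]
      rw [h1, dot_mulVec_swap, star_eq_conjTranspose,
        Matrix.conjTranspose_eq_transpose_of_trivial, Matrix.transpose_transpose, ← hgv,
        dotProduct_comm]
    have h5 : a ⬝ᵥ gv ≤ ‖(SX.starProjection w : H)‖ ^ 2 := by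
      rw [← hu'n]; exact hlow
    have h6 : ‖w‖ ^ 2 ≤ c * (a ⬝ᵥ gv) := by
      rw [hwn, ← hNb]; exact quadN b
    have h8 : ‖w‖ ^ 2 ≤ c * ‖(SX.starProjection w : H)‖ ^ 2 :=
      le_trans h6 (mul_le_mul_of_nonneg_left h5 hcpos.le)
    have h9 : ‖w‖ ^ 2 / c ≤ ‖(SX.starProjection w : H)‖ ^ 2 :=
      (div_le_iff₀ hcpos).mpr (by linarith [h8])
    have key : ‖w - (SX.starProjection w : H)‖ ^ 2 ≤ (s * ‖w‖) ^ 2 := by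
      have hQ := norm_sub_proj_sq SX w
      have hexp : (s * ‖w‖) ^ 2 = (1 - 1/c) * ‖w‖ ^ 2 := by rw [mul_pow, hs2]
      have hexp2 : (1 - 1/c) * ‖w‖ ^ 2 = ‖w‖ ^ 2 - ‖w‖ ^ 2 / c := by ring
      rw [hexp, hexp2, hQ]
      linarith [h9]
    calc ‖w - (SX.starProjection w : H)‖
        = Real.sqrt (‖w - (SX.starProjection w : H)‖ ^ 2) :=
          (Real.sqrt_sq (norm_nonneg _)).symm
    _ ≤ Real.sqrt ((s * ‖w‖) ^ 2) := Real.sqrt_le_sqrt key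
    _ = s * ‖w‖ := Real.sqrt_sq (by positivity)
  -- pointwise estimate
  have hpt := two_proj_diff SX ST s hs0 hSTb hSXb
  -- continuity of k
  have hkcont : Continuous k := by
    rw [continuous_iff_continuousAt]
    intro t
    have hdist : ∀ s' : X, dist (k s') (k t) = Real.sqrt (K s' s' - 2 * K s' t + K t t) := by
      intro s'
      rw [dist_eq_norm, ← Real.sqrt_sq (norm_nonneg (k s' - k t))]
      congr 1
      rw [norm_sub_sq_real, ← real_inner_self_eq_norm_sq, ← real_inner_self_eq_norm_sq,
        ← hK, ← hK, ← hK]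
    have hFc : Continuous fun s' : X => Real.sqrt (K s' s' - 2 * K s' t + K t t) := by
      apply Real.continuous_sqrt.comp
      have c1 : Continuous fun s' : X => K s' s' :=
        hKcont.comp (continuous_id.prodMk continuous_id)
      have c2 : Continuous fun s' : X => K s' t :=
        hKcont.comp (continuous_id.prodMk continuous_const)
      exact (c1.sub (continuous_const.mul c2)).add continuous_const
    have h0 : Filter.Tendsto (fun s' : X => Real.sqrt (K s' s' - 2 * K s' t + K t t))
        (nhds t) (nhds 0) := by
      have := hFc.continuousAt (x := t)
      have hval : Real.sqrt (K t t - 2 * K t t + K t t) = 0 := by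
        rw [show K t t - 2 * K t t + K t t = 0 by ring, Real.sqrt_zero]
      rw [ContinuousAt, hval] at this
      exact this
    exact tendsto_iff_dist_tendsto_zero.mpr (h0.congr fun s' => (hdist s').symm)
  -- integrability
  have hKttc : Continuous fun t => K t t := hKcont.comp (continuous_id.prodMk continuous_id)
  have hfc : Continuous fun t => Metric.infDist (k t) (SX : Set H) ^ 2 :=
    ((Metric.continuous_infDist_pt _).comp hkcont).pow 2
  have hgc : Continuous fun t => Metric.infDist (k t) (ST : Set H) ^ 2 :=
    ((Metric.continuous_infDist_pt _).comp hkcont).pow 2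
  have hif : IntegrableOn (fun t => Metric.infDist (k t) (SX : Set H) ^ 2) Ω μ :=
    hfc.continuousOn.integrableOn_compact hΩ
  have hig : IntegrableOn (fun t => Metric.infDist (k t) (ST : Set H) ^ 2) Ω μ :=
    hgc.continuousOn.integrableOn_compact hΩ
  have hih : IntegrableOn (fun t => 2 * s * K t t) Ω μ :=
    (continuous_const.mul hKttc).continuousOn.integrableOn_compact hΩ
  -- pointwise inequality
  have hptw : ∀ t, Metric.infDist (k t) (SX : Set H) ^ 2 - Metric.infDist (k t) (ST : Set H) ^ 2
      ≤ 2 * s * K t t := by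
    intro t
    rw [infDist_submodule SX (k t), infDist_submodule ST (k t), norm_sub_proj_sq,
      norm_sub_proj_sq]
    have hKt : K t t = ‖k t‖ ^ 2 := by rw [hK, real_inner_self_eq_norm_sq]
    rw [hKt]
    have := hpt (k t)
    linarith
  -- final chain
  have hsub : (∫ t in Ω, Metric.infDist (k t) (SX : Set H) ^ 2 ∂μ)
      - (∫ t in Ω, Metric.infDist (k t) (ST : Set H) ^ 2 ∂μ)
      = ∫ t in Ω, (Metric.infDist (k t) (SX : Set H) ^ 2
          - Metric.infDist (k t) (ST : Set H) ^ 2) ∂μ :=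
    (integral_sub hif hig).symm
  rw [hsub]
  have hle := integral_mono (μ := μ.restrict Ω) (hif.sub hig) hih hptw
  refine le_trans hle ?_
  have hmul : (∫ t in Ω, 2 * s * K t t ∂μ) = 2 * s * ∫ t in Ω, K t t ∂μ :=
    integral_const_mul (2 * s) fun t => K t t
  rw [hmul]
  have : 2 * s * (∫ t in Ω, K t t ∂μ) = 2 * (∫ t in Ω, K t t ∂μ) * s := by ring
  rw [this]
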